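/- Let n : ℝ^{1+d} → ℝ³ be six times continuously differentiable. Then at every point, n·□³n + ∂_μ□n·∂^μ□n = Σ_μ ∂_μ V^μ, where V^μ := η^{μν}( n·∂_ν□²n − ∂_νn·□²n + □n·∂_ν□n ). In other words, the combination of the dimension-6 two-field operators F₆₁ = n·□³n and F₆₆ = ∂_μ□n·∂^μ□n given by F₆₁ + F₆₆ is a total derivative. -/

import Mathlib

open Matrix

/-- The partial derivative `∂_μ f` of a function on `ℝ^m` in the `μ`-th coordinate
direction. -/
noncomputable def pd {m : ℕ} {F : Type*} [NormedAddCommGroup F] [NormedSpace ℝ F]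
    (μ : Fin m) (f : (Fin m → ℝ) → F) (x : Fin m → ℝ) : F :=
  fderiv ℝ f x (Pi.single μ 1)

/-- The Minkowski metric `η = diag(−1,+1,…,+1)` on `ℝ^{1+d}`. -/
def eta (d : ℕ) (μ ν : Fin (d+1)) : ℝ :=
  if μ = ν then (if (μ : ℕ) = 0 then -1 else 1) else 0

/-- The d'Alembertian `□ = η^{μν}∂_μ∂_ν`, applied componentwise. -/
noncomputable def box {d : ℕ} {F : Type*} [NormedAddCommGroup F] [NormedSpace ℝ F]
    (f : (Fin (d+1) → ℝ) → F) : (Fin (d+1) → ℝ) → F :=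
  fun x => ∑ μ : Fin (d+1), ∑ ν : Fin (d+1), eta d μ ν • pd μ (pd ν f) x

lemma eta_symm (d : ℕ) (μ ν : Fin (d+1)) : eta d μ ν = eta d ν μ := by
  unfold eta
  rcases eq_or_ne μ ν with h | h
  · subst h; rfl
  · simp [h, h.symm]

lemma pd_contDiff {m k : ℕ} {F : Type*} [NormedAddCommGroup F] [NormedSpace ℝ F]
    {f : (Fin m → ℝ) → F} (hf : ContDiff ℝ (k+1 : ℕ) f) (μ : Fin m) :
    ContDiff ℝ (k : ℕ) (pd μ f) := by
  have h := (hf.fderiv_right (m := k) (by exact_mod_cast le_refl _)).clm_apply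
    (contDiff_const (c := Pi.single μ (1:ℝ)))
  exact h

lemma box_contDiff {d k : ℕ} {F : Type*} [NormedAddCommGroup F] [NormedSpace ℝ F]
    {f : (Fin (d+1) → ℝ) → F} (hf : ContDiff ℝ (k+2 : ℕ) f) :
    ContDiff ℝ (k : ℕ) (box f) := by
  unfold box
  exact ContDiff.sum fun μ _ => ContDiff.sum fun ν _ =>
    ((pd_contDiff (pd_contDiff hf ν) μ)).const_smul _

lemma pd_sum {m : ℕ} {ι : Type*} (s : Finset ι) {F : Type*} [NormedAddCommGroup F]
    [NormedSpace ℝ F] {f : ι → (Fin m → ℝ) → F} {x : Fin m → ℝ}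
    (h : ∀ i ∈ s, DifferentiableAt ℝ (f i) x) (μ : Fin m) :
    pd μ (fun y => ∑ i ∈ s, f i y) x = ∑ i ∈ s, pd μ (f i) x := by
  unfold pd
  rw [fderiv_fun_sum h]
  simp

lemma pd_const_mul {m : ℕ} {f : (Fin m → ℝ) → ℝ} {x : Fin m → ℝ} (c : ℝ)
    (h : DifferentiableAt ℝ f x) (μ : Fin m) :
    pd μ (fun y => c * f y) x = c * pd μ f x := by
  unfold pd
  rw [fderiv_const_mul h]
  simp

lemma pd_add {m : ℕ} {F : Type*} [NormedAddCommGroup F] [NormedSpace ℝ F]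
    {f g : (Fin m → ℝ) → F} {x : Fin m → ℝ}
    (hf : DifferentiableAt ℝ f x) (hg : DifferentiableAt ℝ g x) (μ : Fin m) :
    pd μ (fun y => f y + g y) x = pd μ f x + pd μ g x := by
  unfold pd
  rw [fderiv_fun_add hf hg]
  simp

lemma pd_sub {m : ℕ} {F : Type*} [NormedAddCommGroup F] [NormedSpace ℝ F]
    {f g : (Fin m → ℝ) → F} {x : Fin m → ℝ}
    (hf : DifferentiableAt ℝ f x) (hg : DifferentiableAt ℝ g x) (μ : Fin m) :
    pd μ (fun y => f y - g y) x = pd μ f x - pd μ g x := by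
  unfold pd
  rw [fderiv_fun_sub hf hg]
  simp

lemma dot_diff {m : ℕ} {f g : (Fin m → ℝ) → (Fin 3 → ℝ)} {x : Fin m → ℝ}
    (hf : DifferentiableAt ℝ f x) (hg : DifferentiableAt ℝ g x) :
    DifferentiableAt ℝ (fun y => f y ⬝ᵥ g y) x := by
  simp only [dotProduct]
  exact DifferentiableAt.fun_sum fun i _ =>
    ((((ContinuousLinearMap.proj (R := ℝ) (φ := fun _ : Fin 3 => ℝ) i).hasFDerivAt).comp x
      hf.hasFDerivAt).differentiableAt).mul
    ((((ContinuousLinearMap.proj (R := ℝ) (φ := fun _ : Fin 3 => ℝ) i).hasFDerivAt).comp x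
      hg.hasFDerivAt).differentiableAt)

lemma pd_dot {m : ℕ} {f g : (Fin m → ℝ) → (Fin 3 → ℝ)} {x : Fin m → ℝ}
    (hf : DifferentiableAt ℝ f x) (hg : DifferentiableAt ℝ g x) (μ : Fin m) :
    pd μ (fun y => f y ⬝ᵥ g y) x = pd μ f x ⬝ᵥ g x + f x ⬝ᵥ pd μ g x := by
  have hfi : ∀ i : Fin 3, HasFDerivAt (fun y => f y i)
      ((ContinuousLinearMap.proj i).comp (fderiv ℝ f x)) x := fun i =>
    ((ContinuousLinearMap.proj (R := ℝ) (φ := fun _ : Fin 3 => ℝ) i).hasFDerivAt).comp x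
      hf.hasFDerivAt
  have hgi : ∀ i : Fin 3, HasFDerivAt (fun y => g y i)
      ((ContinuousLinearMap.proj i).comp (fderiv ℝ g x)) x := fun i =>
    ((ContinuousLinearMap.proj (R := ℝ) (φ := fun _ : Fin 3 => ℝ) i).hasFDerivAt).comp x
      hg.hasFDerivAt
  have H : HasFDerivAt (fun y => f y ⬝ᵥ g y)
      (∑ i : Fin 3, ((f x i) • ((ContinuousLinearMap.proj i).comp (fderiv ℝ g x))
        + (g x i) • ((ContinuousLinearMap.proj i).comp (fderiv ℝ f x)))) x := by
    simp only [dotProduct]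
    exact HasFDerivAt.fun_sum fun i _ => (hfi i).mul (hgi i)
  show fderiv ℝ (fun y => f y ⬝ᵥ g y) x (Pi.single μ 1) = _
  rw [H.fderiv]
  simp [dotProduct, pd, Finset.sum_add_distrib, mul_comm, add_comm]

lemma dot_sum_right {ι : Type*} (s : Finset ι) (v : Fin 3 → ℝ) (w : ι → Fin 3 → ℝ) :
    v ⬝ᵥ (∑ i ∈ s, w i) = ∑ i ∈ s, v ⬝ᵥ w i := by
  simp only [dotProduct, Finset.sum_apply, Finset.mul_sum]
  rw [Finset.sum_comm]

lemma dot_sum_left {ι : Type*} (s : Finset ι) (v : Fin 3 → ℝ) (w : ι → Fin 3 → ℝ) :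
    (∑ i ∈ s, w i) ⬝ᵥ v = ∑ i ∈ s, w i ⬝ᵥ v := by
  simp only [dotProduct, Finset.sum_apply, Finset.sum_mul]
  rw [Finset.sum_comm]

lemma dot_smul_right (c : ℝ) (v w : Fin 3 → ℝ) : v ⬝ᵥ (c • w) = c * (v ⬝ᵥ w) := by
  simp [dotProduct, Finset.mul_sum, mul_comm, mul_left_comm]

lemma dot_smul_left (c : ℝ) (v w : Fin 3 → ℝ) : (c • w) ⬝ᵥ v = c * (w ⬝ᵥ v) := by
  simp [dotProduct, Finset.mul_sum, mul_assoc]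

/-- the combination `F₆₁ + F₆₆ = n·□³n + ∂_μ□n·∂^μ□n` is a total
derivative: it equals `∂_μ V^μ` with
`V^μ = η^{μν}(n·∂_ν□²n − ∂_νn·□²n + □n·∂_ν□n)`. -/
theorem F61_plus_F66_total_derivative {d : ℕ}
    (n : (Fin (d+1) → ℝ) → (Fin 3 → ℝ)) (hn : ContDiff ℝ 6 n) :
    ∀ x : Fin (d+1) → ℝ,
      n x ⬝ᵥ box (box (box n)) x
        + (∑ μ : Fin (d+1), ∑ ν : Fin (d+1),
            eta d μ ν * (pd μ (box n) x ⬝ᵥ pd ν (box n) x))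
      = ∑ μ : Fin (d+1),
          pd μ (fun y => ∑ ν : Fin (d+1),
            eta d μ ν * (n y ⬝ᵥ pd ν (box (box n)) y
              - pd ν n y ⬝ᵥ box (box n) y
              + box n y ⬝ᵥ pd ν (box n) y)) x := by
  have hn6 : ContDiff ℝ (6:ℕ) n := by exact_mod_cast hn
  have hB1 : ContDiff ℝ (4:ℕ) (box n) := box_contDiff hn6
  have hB2 : ContDiff ℝ (2:ℕ) (box (box n)) := box_contDiff hB1
  have one_le : ∀ k : ℕ, 1 ≤ k → (1 : WithTop ℕ∞) ≤ (k : ℕ) := by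
    intro k hk; exact_mod_cast hk
  intro x
  have d_n : DifferentiableAt ℝ n x := (hn6.differentiable (by norm_num)) x
  have d_B1 : DifferentiableAt ℝ (box n) x := (hB1.differentiable (by norm_num)) x
  have d_B2 : DifferentiableAt ℝ (box (box n)) x :=
    (hB2.differentiable (by norm_num)) x
  have d_pdn : ∀ ν, DifferentiableAt ℝ (pd ν n) x := fun ν =>
    ((pd_contDiff (k := 5) hn6 ν).differentiable (by norm_num)) x
  have d_pdB1 : ∀ ν, DifferentiableAt ℝ (pd ν (box n)) x := fun ν =>
    ((pd_contDiff (k := 3) hB1 ν).differentiable (by norm_num)) x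
  have d_pdB2 : ∀ ν, DifferentiableAt ℝ (pd ν (box (box n))) x := fun ν =>
    ((pd_contDiff (k := 1) hB2 ν).differentiable (by norm_num)) x
  have d_A : ∀ ν, DifferentiableAt ℝ (fun y =>
      n y ⬝ᵥ pd ν (box (box n)) y - pd ν n y ⬝ᵥ box (box n) y
        + box n y ⬝ᵥ pd ν (box n) y) x := fun ν =>
    ((dot_diff d_n (d_pdB2 ν)).sub (dot_diff (d_pdn ν) d_B2)).add
      (dot_diff d_B1 (d_pdB1 ν))
  -- expand the RHS
  have hRHS : ∀ μ : Fin (d+1),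
      pd μ (fun y => ∑ ν : Fin (d+1),
        eta d μ ν * (n y ⬝ᵥ pd ν (box (box n)) y
          - pd ν n y ⬝ᵥ box (box n) y
          + box n y ⬝ᵥ pd ν (box n) y)) x
      = ∑ ν : Fin (d+1), eta d μ ν *
          ((pd μ n x ⬝ᵥ pd ν (box (box n)) x + n x ⬝ᵥ pd μ (pd ν (box (box n))) x)
            - (pd μ (pd ν n) x ⬝ᵥ box (box n) x + pd ν n x ⬝ᵥ pd μ (box (box n)) x)
            + (pd μ (box n) x ⬝ᵥ pd ν (box n) x + box n x ⬝ᵥ pd μ (pd ν (box n)) x)) := by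
    intro μ
    rw [pd_sum Finset.univ (fun ν _ => (d_A ν).const_mul _) μ]
    refine Finset.sum_congr rfl fun ν _ => ?_
    rw [pd_const_mul _ (d_A ν) μ]
    congr 1
    rw [pd_add ((dot_diff d_n (d_pdB2 ν)).fun_sub (dot_diff (d_pdn ν) d_B2))
        (dot_diff d_B1 (d_pdB1 ν)) μ,
      pd_sub (dot_diff d_n (d_pdB2 ν)) (dot_diff (d_pdn ν) d_B2) μ,
      pd_dot d_n (d_pdB2 ν) μ, pd_dot (d_pdn ν) d_B2 μ, pd_dot d_B1 (d_pdB1 ν) μ]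
  rw [Finset.sum_congr rfl fun μ _ => hRHS μ]
  -- expand n ⬝ □³n
  have hbox3 : n x ⬝ᵥ box (box (box n)) x
      = ∑ μ : Fin (d+1), ∑ ν : Fin (d+1),
          eta d μ ν * (n x ⬝ᵥ pd μ (pd ν (box (box n))) x) := by
    show n x ⬝ᵥ (∑ μ : Fin (d+1), ∑ ν : Fin (d+1),
        eta d μ ν • pd μ (pd ν (box (box n))) x) = _
    rw [dot_sum_right]
    refine Finset.sum_congr rfl fun μ _ => ?_
    rw [dot_sum_right]
    exact Finset.sum_congr rfl fun ν _ => dot_smul_right _ _ _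
  -- key cancellation identities
  have e1 : (∑ μ : Fin (d+1), ∑ ν : Fin (d+1),
        eta d μ ν * (pd μ n x ⬝ᵥ pd ν (box (box n)) x))
      = ∑ μ : Fin (d+1), ∑ ν : Fin (d+1),
        eta d μ ν * (pd ν n x ⬝ᵥ pd μ (box (box n)) x) := by
    rw [Finset.sum_comm]
    exact Finset.sum_congr rfl fun μ _ => Finset.sum_congr rfl fun ν _ => by
      rw [eta_symm]
  have e2 : (∑ μ : Fin (d+1), ∑ ν : Fin (d+1),
        eta d μ ν * (pd μ (pd ν n) x ⬝ᵥ box (box n) x))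
      = box n x ⬝ᵥ box (box n) x := by
    show _ = (∑ μ : Fin (d+1), ∑ ν : Fin (d+1),
        eta d μ ν • pd μ (pd ν n) x) ⬝ᵥ box (box n) x
    rw [dot_sum_left]
    refine Finset.sum_congr rfl fun μ _ => ?_
    rw [dot_sum_left]
    exact Finset.sum_congr rfl fun ν _ => (dot_smul_left _ _ _).symm
  have e3 : (∑ μ : Fin (d+1), ∑ ν : Fin (d+1),
        eta d μ ν * (box n x ⬝ᵥ pd μ (pd ν (box n)) x))
      = box n x ⬝ᵥ box (box n) x := by
    show _ = box n x ⬝ᵥ (∑ μ : Fin (d+1), ∑ ν : Fin (d+1),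
        eta d μ ν • pd μ (pd ν (box n)) x)
    rw [dot_sum_right]
    refine Finset.sum_congr rfl fun μ _ => ?_
    rw [dot_sum_right]
    exact Finset.sum_congr rfl fun ν _ => (dot_smul_right _ _ _).symm
  simp only [mul_add, mul_sub, Finset.sum_add_distrib, Finset.sum_sub_distrib] at *
  rw [hbox3]
  linarith [e1, e2, e3]
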